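/- The braid relation T_1 T_2 T_1 = T_2 T_1 T_2 holds for the Demazure–Lusztig operators acting on rational functions in three variables. -/

import Mathlib

open MvPolynomial

lemma poly_helper {L : Type*} [CommRing L] (T f a b c d e A Ap B Bp Cc : L)
    (hA : Ap = T + 1 - A) (hB : Bp = T + 1 - B)
    (hC : Cc * (A + B - T - 1) = A * B - T) :
    T * (T * (T * f - A * (f - a)) - B * (T * f - A * (f - a) - (T * b - Cc * (b - d)))) - A * (T * (T * f - A * (f - a)) - B * (T * f - A * (f - a) - (T * b - Cc * (b - d))) - (T * (T * a - Ap * (a - f)) - Cc * (T * a - Ap * (a - f) - (T * c - B * (c - e))))) = T * (T * (T * f - B * (f - b)) - A * (T * f - B * (f - b) - (T * a - Cc * (a - c)))) - B * (T * (T * f - B * (f - b)) - A * (T * f - B * (f - b) - (T * a - Cc * (a - c))) - (T * (T * b - Bp * (b - f)) - Cc * (T * b - Bp * (b - f) - (T * d - A * (d - e))))) := by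
  subst hA hB
  linear_combination (b * B - a * A - f * B + f * A) * hC

set_option maxHeartbeats 1000000 in
lemma field_helper {L : Type*} [Field L] (T y0 y1 y2 f a b c d e : L)
    (h01 : y0 - y1 ≠ 0) (h12 : y1 - y2 ≠ 0) (h02 : y0 - y2 ≠ 0) :
    T * (T * (T * f - (T * y0 - y1) / (y0 - y1) * (f - a)) - (T * y1 - y2) / (y1 - y2) * (T * f - (T * y0 - y1) / (y0 - y1) * (f - a) - (T * b - (T * y0 - y2) / (y0 - y2) * (b - d)))) - (T * y0 - y1) / (y0 - y1) * (T * (T * f - (T * y0 - y1) / (y0 - y1) * (f - a)) - (T * y1 - y2) / (y1 - y2) * (T * f - (T * y0 - y1) / (y0 - y1) * (f - a) - (T * b - (T * y0 - y2) / (y0 - y2) * (b - d))) - (T * (T * a - (T * y1 - y0) / (y1 - y0) * (a - f)) - (T * y0 - y2) / (y0 - y2) * (T * a - (T * y1 - y0) / (y1 - y0) * (a - f) - (T * c - (T * y1 - y2) / (y1 - y2) * (c - e))))) = T * (T * (T * f - (T * y1 - y2) / (y1 - y2) * (f - b)) - (T * y0 - y1) / (y0 - y1) * (T * f - (T * y1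 - y2) / (y1 - y2) * (f - b) - (T * a - (T * y0 - y2) / (y0 - y2) * (a - c)))) - (T * y1 - y2) / (y1 - y2) * (T * (T * f - (T * y1 - y2) / (y1 - y2) * (f - b)) - (T * y0 - y1) / (y0 - y1) * (T * f - (T * y1 - y2) / (y1 - y2) * (f - b) - (T * a - (T * y0 - y2) / (y0 - y2) * (a - c))) - (T * (T * b - (T * y2 - y1) / (y2 - y1) * (b - f)) - (T * y0 - y2) / (y0 - y2) * (T * b - (T * y2 - y1) / (y2 - y1) * (b - f) - (T * d - (T * y0 - y1) / (y0 - y1) * (d - e))))) := by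
  have h10 : y1 - y0 ≠ 0 := fun h => h01 (by linear_combination -h)
  have h21 : y2 - y1 ≠ 0 := fun h => h12 (by linear_combination -h)
  exact poly_helper T f a b c d e
    ((T * y0 - y1) / (y0 - y1)) ((T * y1 - y0) / (y1 - y0))
    ((T * y1 - y2) / (y1 - y2)) ((T * y2 - y1) / (y2 - y1))
    ((T * y0 - y2) / (y0 - y2))
    (by field_simp; ring) (by field_simp; ring) (by field_simp; ring)

section Aux

variable {K : Type*} [Field K]

noncomputable def liftS (σ : Equiv.Perm (Fin 3)) :
    FractionRing (MvPolynomial (Fin 3) K) ≃+* FractionRing (MvPolynomial (Fin 3) K) :=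
  IsFractionRing.ringEquivOfRingEquiv (MvPolynomial.renameEquiv K σ).toRingEquiv

lemma liftS_algebraMap (σ : Equiv.Perm (Fin 3)) (p : MvPolynomial (Fin 3) K) :
    liftS σ (algebraMap _ (FractionRing (MvPolynomial (Fin 3) K)) p)
      = algebraMap _ _ (rename σ p) := by
  simp [liftS]

lemma liftS_comp (σ τ : Equiv.Perm (Fin 3)) (g : FractionRing (MvPolynomial (Fin 3) K)) :
    liftS σ (liftS τ g) = liftS (σ * τ) g := by
  have : ((liftS (K := K) σ).toRingHom.comp (liftS τ).toRingHom) = (liftS (K := K) (σ * τ)).toRingHom := by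
    apply IsLocalization.ringHom_ext (nonZeroDivisors (MvPolynomial (Fin 3) K))
    refine RingHom.ext fun q => ?_
    simp [RingHom.comp_apply, liftS_algebraMap, rename_rename, ← Equiv.Perm.coe_mul]
  exact congrArg (· g) (congrArg DFunLike.coe this)


lemma liftS_one (g : FractionRing (MvPolynomial (Fin 3) K)) : liftS (K := K) 1 g = g := by
  have : (liftS (K := K) 1).toRingHom = RingHom.id _ := by
    apply IsLocalization.ringHom_ext (nonZeroDivisors (MvPolynomial (Fin 3) K))
    refine RingHom.ext fun q => ?_
    simp [RingHom.comp_apply, liftS_algebraMap]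
  exact congrArg (· g) (congrArg DFunLike.coe this)

set_option maxHeartbeats 1000000 in
set_option synthInstance.maxHeartbeats 400000 in
lemma main_braid (t : K) (f : FractionRing (MvPolynomial (Fin 3) K)) :
    letI F := FractionRing (MvPolynomial (Fin 3) K)
    letI ι : MvPolynomial (Fin 3) K →+* F := algebraMap _ _
    letI x : Fin 3 → F := fun i => ι (X i)
    letI tF : F := ι (C t)
    letI s1 : F ≃+* F := liftS (Equiv.swap (0 : Fin 3) 1)
    letI s2 : F ≃+* F := liftS (Equiv.swap (1 : Fin 3) 2)
    letI T1 : F → F := fun g => tF * g - ((tF * x 0 - x 1) / (x 0 - x 1)) * (g - s1 g)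
    letI T2 : F → F := fun g => tF * g - ((tF * x 1 - x 2) / (x 1 - x 2)) * (g - s2 g)
    T1 (T2 (T1 f)) = T2 (T1 (T2 f)) := by
  dsimp only
  set ι : MvPolynomial (Fin 3) K →+* FractionRing (MvPolynomial (Fin 3) K) := algebraMap _ _ with hι
  have hinj : Function.Injective ι := IsFractionRing.injective _ _
  set s1 : FractionRing (MvPolynomial (Fin 3) K) ≃+* FractionRing (MvPolynomial (Fin 3) K) := liftS (Equiv.swap (0 : Fin 3) 1) with hs1
  set s2 : FractionRing (MvPolynomial (Fin 3) K) ≃+* FractionRing (MvPolynomial (Fin 3) K) := liftS (Equiv.swap (1 : Fin 3) 2) with hs2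
  -- action on generators
  have e1x0 : s1 (ι (X 0)) = ι (X 1) := by rw [hs1, liftS_algebraMap]; simp; rfl
  have e1x1 : s1 (ι (X 1)) = ι (X 0) := by rw [hs1, liftS_algebraMap]; simp; rfl
  have e1x2 : s1 (ι (X 2)) = ι (X 2) := by
    rw [hs1, liftS_algebraMap]; simp [Equiv.swap_apply_of_ne_of_ne]; rfl
  have e2x0 : s2 (ι (X 0)) = ι (X 0) := by
    rw [hs2, liftS_algebraMap]; simp [Equiv.swap_apply_of_ne_of_ne]; rfl
  have e2x1 : s2 (ι (X 1)) = ι (X 2) := by rw [hs2, liftS_algebraMap]; simp; rfl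
  have e2x2 : s2 (ι (X 2)) = ι (X 1) := by rw [hs2, liftS_algebraMap]; simp; rfl
  have e1t : s1 (ι (C t)) = ι (C t) := by rw [hs1, liftS_algebraMap]; simp; rfl
  have e2t : s2 (ι (C t)) = ι (C t) := by rw [hs2, liftS_algebraMap]; simp; rfl
  have inv1 : ∀ g : FractionRing (MvPolynomial (Fin 3) K), s1 (s1 g) = g := by
    intro g; rw [hs1, liftS_comp, Equiv.swap_mul_self]; exact liftS_one g
  have inv2 : ∀ g : FractionRing (MvPolynomial (Fin 3) K), s2 (s2 g) = g := by
    intro g; rw [hs2, liftS_comp, Equiv.swap_mul_self]; exact liftS_one g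
  have hperm : (Equiv.swap (0:Fin 3) 1) * (Equiv.swap 1 2 * Equiv.swap 0 1)
      = Equiv.swap (1:Fin 3) 2 * (Equiv.swap 0 1 * Equiv.swap 1 2) := by decide
  have braid : ∀ g : FractionRing (MvPolynomial (Fin 3) K), s1 (s2 (s1 g)) = s2 (s1 (s2 g)) := by
    intro g
    simp only [hs1, hs2, liftS_comp]
    rw [hperm]
  -- named images of f
  set a := s1 f with ha
  set b := s2 f with hb
  set c := s1 b with hc
  set d := s2 a with hd
  set e := s1 d with he
  have hs1f : s1 f = a := rfl
  have hs2f : s2 f = b := rfl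
  have hs1a : s1 a = f := by rw [ha, inv1]
  have hs2b : s2 b = f := by rw [hb, inv2]
  have hs1b : s1 b = c := rfl
  have hs2a : s2 a = d := rfl
  have hs1d : s1 d = e := rfl
  have hs2c : s2 c = e := by rw [hc, hb, ← braid, ← hd, he]
  have hs1c : s1 c = b := by rw [hc, inv1]
  have hs2d : s2 d = a := by rw [hd, inv2]
  have hs1e : s1 e = d := by rw [he, inv1]
  have hs2e : s2 e = c := by rw [he, hd, ha, braid, inv2, ← hb]
  clear_value a b c d e
  clear ha hb hc hd he
  -- nonvanishing denominators
  have hne : ∀ i j : Fin 3, i ≠ j → ι (X i) - ι (X j) ≠ 0 := by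
    intro i j hij
    rw [← map_sub]
    intro h
    exact hij (X_injective (sub_eq_zero.mp (hinj (by simpa using h))))
  have h01 : ι (X 0) - ι (X 1) ≠ 0 := hne 0 1 (by decide)
  have h12 : ι (X 1) - ι (X 2) ≠ 0 := hne 1 2 (by decide)
  have h02 : ι (X 0) - ι (X 2) ≠ 0 := hne 0 2 (by decide)
  simp only [map_sub, map_mul, map_div₀, e1x0, e1x1, e1x2, e2x0, e2x1, e2x2, e1t, e2t,
    hs1f, hs2f, hs1a, hs2b, hs1b, hs2a, hs1d, hs2c, hs1c, hs2d, hs1e, hs2e]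
  exact field_helper (ι (MvPolynomial.C t)) (ι (MvPolynomial.X 0)) (ι (MvPolynomial.X 1))
    (ι (MvPolynomial.X 2)) f a b c d e h01 h12 h02

end Aux

/-- In the field of rational functions `K(x₁,x₂,x₃)` (the fraction field of
`K[x₁,x₂,x₃]`), with `s_i` the automorphism swapping `x_i, x_{i+1}` and the Demazure–Lusztig
operators `T_i f = t·f − ((t·x_i − x_{i+1})/(x_i − x_{i+1}))·(f − s_i f)` for `i = 1, 2`,
the braid relation `T₁ T₂ T₁ = T₂ T₁ T₂` holds: `T₁(T₂(T₁ f)) = T₂(T₁(T₂ f))` for all `f`. -/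
theorem braid_relation (K : Type*) [Field K] (t : K) :
    ∀ f : FractionRing (MvPolynomial (Fin 3) K),
      letI F := FractionRing (MvPolynomial (Fin 3) K)
      letI ι : MvPolynomial (Fin 3) K →+* F := algebraMap _ _
      letI x : Fin 3 → F := fun i => ι (X i)
      letI tF : F := ι (C t)
      letI s1 : F ≃+* F := IsFractionRing.ringEquivOfRingEquiv
        (MvPolynomial.renameEquiv K (Equiv.swap (0 : Fin 3) 1)).toRingEquiv
      letI s2 : F ≃+* F := IsFractionRing.ringEquivOfRingEquiv
        (MvPolynomial.renameEquiv K (Equiv.swap (1 : Fin 3) 2)).toRingEquiv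
      letI T1 : F → F := fun g => tF * g - ((tF * x 0 - x 1) / (x 0 - x 1)) * (g - s1 g)
      letI T2 : F → F := fun g => tF * g - ((tF * x 1 - x 2) / (x 1 - x 2)) * (g - s2 g)
      T1 (T2 (T1 f)) = T2 (T1 (T2 f)) := by
  intro f
  exact main_braid t f
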